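/- Let J ∈ C⁺(g) admit a basis (β¹,β²,β³) of its space of (1,0)-forms with β¹∧β²∧β³∧ω̄¹∧ω²∧ω³ ≠ 0. Then there exist a,b,c,d,x,y,v ∈ ℂ with d = −a·v such that the forms γ¹ = ω¹ + a·ω̄¹ + b·ω², γ² = ω̄² + c·ω̄¹ + d·ω², γ³ = ω̄³ + x·ω̄¹ + y·ω² + v·ω³ constitute a basis of the space of (1,0)-forms of J. -/
import Mathlib


open scoped ComplexOrder

noncomputable section

/-- The underlying real vector space of the Lie algebra `g` (coordinates w.r.t. `E₁,…,E₆`). -/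
abbrev GV : Type := Fin 6 → ℝ

/-- The basis vectors `E₁,…,E₆` (indexed by `0,…,5`). -/
def E (i : Fin 6) : GV := Pi.single i 1

/-- The Lie bracket of `g`: the only nonzero brackets of basis vectors are
`[E₁,E₃] = -E₅`, `[E₂,E₄] = E₅`, `[E₁,E₄] = -E₆`, `[E₂,E₃] = -E₆`. -/
def br (X Y : GV) : GV :=
  ![0, 0, 0, 0,
    -(X 0 * Y 2 - X 2 * Y 0) + (X 1 * Y 3 - X 3 * Y 1),
    -(X 0 * Y 3 - X 3 * Y 0) - (X 1 * Y 2 - X 2 * Y 1)]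

/-- `J` is a complex structure: `J ∘ J = -id`. -/
def IsCpxStr (J : Module.End ℝ GV) : Prop := ∀ x, J (J x) = -x

/-- Integrability (Newlander–Nirenberg) condition. -/
def Integrable (J : Module.End ℝ GV) : Prop :=
  ∀ X Y, br (J X) (J Y) = br X Y + J (br (J X) Y) + J (br X (J Y))

/-- `J` induces the standard orientation of `g`. -/
def PosOrient (J : Module.End ℝ GV) : Prop :=
  ∃ v₁ v₂ v₃ : GV,
    0 < (Matrix.of fun i j => ![v₁, J v₁, v₂, J v₂, v₃, J v₃] i j).det

/-- `C⁺(g)`: integrable complex structures inducing the standard orientation. -/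
def Cplus : Set (Module.End ℝ GV) := {J | IsCpxStr J ∧ Integrable J ∧ PosOrient J}

/-- The inner product making `E₁,…,E₆` orthonormal. -/
def inner6 (x y : GV) : ℝ := ∑ i, x i * y i

def IsOrthog (J : Module.End ℝ GV) : Prop := ∀ x y, inner6 (J x) (J y) = inner6 x y

/-- `C⁺(g,g)`: orthogonal members of `C⁺(g)`. -/
def Cgg : Set (Module.End ℝ GV) := {J | J ∈ Cplus ∧ IsOrthog J}

lemma le46 : (4:ℕ) ≤ 6 := by norm_num

/-- Determinant of `(w̄₁, Ĵw̄₁, w̄₂, Ĵw̄₂)` w.r.t. the basis `(Ē₁,…,Ē₄)` of `g/[g,g]`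
(the coordinates of the class of `v` are the first four coordinates of `v`). -/
def hatDet (J : Module.End ℝ GV) (w₁ w₂ : GV) : ℝ :=
  (Matrix.of fun (i : Fin 4) (j : Fin 4) =>
    ![w₁, J w₁, w₂, J w₂] i (Fin.castLE le46 j)).det

/-- `C₊`: members of `C⁺(g)` whose induced structure on `g/[g,g]` is positively oriented. -/
def CplusP : Set (Module.End ℝ GV) :=
  {J | J ∈ Cplus ∧ ∃ w₁ w₂ : GV, 0 < hatDet J w₁ w₂}

/-- `C₋`: members of `C⁺(g)` whose induced structure on `g/[g,g]` is negatively oriented. -/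
def CplusM : Set (Module.End ℝ GV) :=
  {J | J ∈ Cplus ∧ ∃ w₁ w₂ : GV, hatDet J w₁ w₂ < 0}

/-- `ℂ ⊗ g*`, identified with coordinate vectors with respect to the dual basis `e¹,…,e⁶`. -/
abbrev MC : Type := Fin 6 → ℂ

/-- Evaluation of a complexified 1-form on a vector of `g`. -/
def ev (α : MC) (v : GV) : ℂ := ∑ i, α i * v i

/-- The dual basis `e¹,…,e⁶` inside `ℂ ⊗ g*`. -/
def eC (i : Fin 6) : MC := Pi.single i 1

def w1 : MC := eC 0 + Complex.I • eC 1
def w2 : MC := eC 2 + Complex.I • eC 3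
def w3 : MC := eC 4 + Complex.I • eC 5
/-- `ω̄¹` -/
def w1b : MC := eC 0 - Complex.I • eC 1
/-- `ω̄²` -/
def w2b : MC := eC 2 - Complex.I • eC 3
/-- `ω̄³` -/
def w3b : MC := eC 4 - Complex.I • eC 5

/-- The space of `(1,0)`-forms of `J`, a complex subspace of `ℂ ⊗ g*`. -/
def holSub (J : Module.End ℝ GV) : Submodule ℂ MC where
  carrier := {α | ∀ v : GV, ev α (J v) = Complex.I * ev α v}
  add_mem' := by
    intro a b ha hb v
    simp only [ev, Pi.add_apply, add_mul, Finset.sum_add_distrib] at *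
    rw [ha v, hb v]; ring
  zero_mem' := by intro v; simp [ev]
  smul_mem' := by
    intro c α hα v
    simp only [ev, Pi.smul_apply, smul_eq_mul, mul_assoc, ← Finset.mul_sum] at *
    rw [hα v]; ring
/-- `(α₁, α₂, α₃)` is a basis of the space of `(1,0)`-forms of `J`. -/
def IsHolBasis (J : Module.End ℝ GV) (α₁ α₂ α₃ : MC) : Prop :=
  LinearIndependent ℂ ![α₁, α₂, α₃] ∧ Submodule.span ℂ {α₁, α₂, α₃} = holSub J

/-- Inclusion into the exterior algebra of `ℂ ⊗ g*`; wedge products are multiplications there. -/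
def ι : MC →ₗ[ℂ] ExteriorAlgebra ℂ MC := ExteriorAlgebra.ι ℂ

/-- The standard bi-invariant complex structure `J₀`. -/
def J0 : Module.End ℝ GV :=
  Matrix.mulVecLin !![0,-1,0,0,0,0; 1,0,0,0,0,0; 0,0,0,-1,0,0;
                      0,0,1,0,0,0; 0,0,0,0,0,-1; 0,0,0,0,1,0]

/-- The vector space underlying `V = span(E₁,E₂,E₃,E₄)`. -/
abbrev W4 : Type := Fin 4 → ℝ

/-- Inclusion `V = span(E₁,…,E₄) ↪ g`. -/
def incl (w : W4) : GV := fun i => if h : (i : ℕ) < 4 then w ⟨i, h⟩ else 0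

def det4W (v : Fin 4 → W4) : ℝ := (Matrix.of fun i j => v i j).det

/-- The topology on the space of `ℝ`-linear endomorphisms of `g`
(as a subspace of the space of all maps `g → g`). -/
instance : TopologicalSpace (Module.End ℝ GV) :=
  TopologicalSpace.induced (fun f => (f : GV → GV)) inferInstance

/-- The span of `E₁,E₂,E₃,E₄`. -/
def V4span : Submodule ℝ GV := Submodule.span ℝ {E 0, E 1, E 2, E 3}

/-- Complex-bilinear extension of evaluation. -/
def evC (α Z : MC) : ℂ := ∑ i, α i * Z i

/-- Complex-bilinear extension of the bracket. -/
def brC (X Y : MC) : MC :=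
  ![0, 0, 0, 0,
    -(X 0 * Y 2 - X 2 * Y 0) + (X 1 * Y 3 - X 3 * Y 1),
    -(X 0 * Y 3 - X 3 * Y 0) - (X 1 * Y 2 - X 2 * Y 1)]

def coeV (X : GV) : MC := fun i => (X i : ℂ)

lemma ev_add (α : MC) (v w : GV) : ev α (v + w) = ev α v + ev α w := by
  simp [ev, Fin.sum_univ_six]; push_cast; ring

lemma pi_sum_E (v : GV) : v = ∑ i, v i • E i := by
  funext j
  simp [E, Finset.sum_apply, Pi.single_apply]

/-- evaluation of `e_k - i (e_k ∘ J)` -/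
lemma ev_alpha (J : Module.End ℝ GV) (k : Fin 6) (v : GV) :
    ev (fun i => eC k i - Complex.I * ((J (E i)) k : ℂ)) v
      = (v k : ℂ) - Complex.I * ((J v) k : ℂ) := by
  have hv : (J v) k = ∑ i, v i * (J (E i)) k := by
    conv_lhs => rw [pi_sum_E v]
    rw [map_sum, Finset.sum_apply]
    simp [Finset.sum_apply]
  rw [ev]
  have : ∀ i, (eC k i - Complex.I * ((J (E i)) k : ℂ)) * (v i : ℂ)
      = eC k i * v i - Complex.I * ((v i * (J (E i)) k : ℝ) : ℂ) := by
    intro i; push_cast; ring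
  rw [Finset.sum_congr rfl fun i _ => this i]
  rw [Finset.sum_sub_distrib, ← Finset.mul_sum, ← Complex.ofReal_sum, ← hv]
  congr 1
  simp [eC, Pi.single_apply, Finset.sum_ite_eq]
lemma alpha_mem_holSub (J : Module.End ℝ GV) (hJ : IsCpxStr J) (k : Fin 6) :
    (fun i => eC k i - Complex.I * ((J (E i)) k : ℂ)) ∈ holSub J := by
  intro v
  rw [ev_alpha, ev_alpha, hJ v]
  have : ((-v) k : ℂ) = -(v k : ℂ) := by push_cast [Pi.neg_apply]; ring
  rw [this]
  linear_combination ((J v) k : ℂ) * Complex.I_mul_I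

/-- A real vector annihilated by all (1,0)-forms is zero. -/
lemma zero_of_holSub_ann (J : Module.End ℝ GV) (hJ : IsCpxStr J) (u : GV)
    (hu : ∀ α ∈ holSub J, ev α u = 0) : u = 0 := by
  funext k
  have h := hu _ (alpha_mem_holSub J hJ k)
  rw [ev_alpha] at h
  have := congrArg Complex.re h
  simpa using this
lemma evC_coe_add_smul (α : MC) (X X' : GV) :
    evC α (coeV X + Complex.I • coeV X') = ev α X + Complex.I * ev α X' := by
  simp [evC, ev, coeV, Fin.sum_univ_six]; ring

lemma ev_sub (α : MC) (v w : GV) : ev α (v - w) = ev α v - ev α w := by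
  simp [ev, Fin.sum_univ_six]; push_cast; ring

/-- elements of the kernel of all of holSub are of the form X + i J X -/
lemma kernel_rep (J : Module.End ℝ GV) (hJ : IsCpxStr J) (Z : MC)
    (hZ : ∀ α ∈ holSub J, evC α Z = 0) :
    ∃ X : GV, Z = coeV X + Complex.I • coeV (J X) := by
  set X : GV := fun i => (Z i).re with hX
  set X' : GV := fun i => (Z i).im with hX'
  have hrep : Z = coeV X + Complex.I • coeV X' := by
    funext i
    simp [coeV, hX, hX', mul_comm]
    rw [mul_comm, Complex.re_add_im]
  have hu : X' - J X = 0 := by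
    apply zero_of_holSub_ann J hJ
    intro α hα
    have h0 := hZ α hα
    rw [hrep, evC_coe_add_smul] at h0
    have hJX : ev α (J X) = Complex.I * ev α X := hα X
    rw [ev_sub, hJX]
    linear_combination (-Complex.I) * h0 + (ev α X') * Complex.I_mul_I
  have : X' = J X := by
    have := sub_eq_zero.mp hu
    exact this
  rw [hrep, this]
  exact ⟨X, rfl⟩
lemma br_app4 (X Y : GV) : br X Y 4 = -(X 0 * Y 2 - X 2 * Y 0) + (X 1 * Y 3 - X 3 * Y 1) := rfl
lemma br_app5 (X Y : GV) : br X Y 5 = -(X 0 * Y 3 - X 3 * Y 0) - (X 1 * Y 2 - X 2 * Y 1) := rfl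
lemma br_app0 (X Y : GV) : br X Y 0 = 0 := rfl
lemma br_app1 (X Y : GV) : br X Y 1 = 0 := rfl
lemma br_app2 (X Y : GV) : br X Y 2 = 0 := rfl
lemma br_app3 (X Y : GV) : br X Y 3 = 0 := rfl
lemma brC_app4 (X Y : MC) : brC X Y 4 = -(X 0 * Y 2 - X 2 * Y 0) + (X 1 * Y 3 - X 3 * Y 1) := rfl
lemma brC_app5 (X Y : MC) : brC X Y 5 = -(X 0 * Y 3 - X 3 * Y 0) - (X 1 * Y 2 - X 2 * Y 1) := rfl
lemma brC_app0 (X Y : MC) : brC X Y 0 = 0 := rfl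
lemma brC_app1 (X Y : MC) : brC X Y 1 = 0 := rfl
lemma brC_app2 (X Y : MC) : brC X Y 2 = 0 := rfl
lemma brC_app3 (X Y : MC) : brC X Y 3 = 0 := rfl

set_option maxHeartbeats 1000000 in
lemma brC_rep (X X' Y Y' : GV) (γ : MC) :
    evC γ (brC (coeV X + Complex.I • coeV X') (coeV Y + Complex.I • coeV Y'))
      = ev γ (br X Y) - ev γ (br X' Y')
        + Complex.I * ev γ (br X' Y) + Complex.I * ev γ (br X Y') := by
  simp only [evC, ev, Fin.sum_univ_six, brC_app0, brC_app1, brC_app2, brC_app3, brC_app4,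
    brC_app5, br_app0, br_app1, br_app2, br_app3, br_app4, br_app5, Pi.add_apply,
    Pi.smul_apply, coeV, smul_eq_mul]
  rw [Complex.ext_iff]
  constructor <;> simp [Complex.ext_iff] <;> push_cast <;> ring

/-- Key integrability consequence. -/
lemma keyE (J : Module.End ℝ GV) (hJ : IsCpxStr J) (hInt : Integrable J)
    (γ : MC) (hγ : γ ∈ holSub J) (Z W : MC)
    (hZ : ∀ α ∈ holSub J, evC α Z = 0) (hW : ∀ α ∈ holSub J, evC α W = 0) :
    evC γ (brC Z W) = 0 := by
  obtain ⟨X, rfl⟩ := kernel_rep J hJ Z hZ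
  obtain ⟨Y, rfl⟩ := kernel_rep J hJ W hW
  rw [brC_rep]
  have hE := hInt X Y
  have h1 : ev γ (br (J X) (J Y)) = ev γ (br X Y) + Complex.I * ev γ (br (J X) Y)
      + Complex.I * ev γ (br X (J Y)) := by
    rw [hE, ev_add, ev_add, hγ (br (J X) Y), hγ (br X (J Y))]
  linear_combination -h1
lemma pi_sum_eC (x : MC) : x = ∑ i, x i • eC i := by
  funext j
  simp [eC, Finset.sum_apply, Pi.single_apply]

lemma span_w_top : Submodule.span ℂ {w1, w2b, w3b, w1b, w2, w3} = ⊤ := by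
  rw [eq_top_iff]
  rintro x -
  have h1 : w1 ∈ ({w1, w2b, w3b, w1b, w2, w3} : Set MC) := by simp
  have h2 : w2b ∈ ({w1, w2b, w3b, w1b, w2, w3} : Set MC) := by simp
  have h3 : w3b ∈ ({w1, w2b, w3b, w1b, w2, w3} : Set MC) := by simp
  have h4 : w1b ∈ ({w1, w2b, w3b, w1b, w2, w3} : Set MC) := by simp
  have h5 : w2 ∈ ({w1, w2b, w3b, w1b, w2, w3} : Set MC) := by simp
  have h6 : w3 ∈ ({w1, w2b, w3b, w1b, w2, w3} : Set MC) := by simp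
  have he : ∀ i : Fin 6, eC i ∈ Submodule.span ℂ ({w1, w2b, w3b, w1b, w2, w3} : Set MC) := by
    intro i
    fin_cases i <;> simp only [Fin.mk_one, Fin.isValue, Fin.zero_eta, Fin.reduceFinMk]
    · have : eC 0 = (2⁻¹ : ℂ) • w1 + (2⁻¹ : ℂ) • w1b := by
        funext j; fin_cases j <;>
          simp [w1, w1b, eC, Pi.single_apply] <;> norm_num
      rw [this]
      exact Submodule.add_mem _ (Submodule.smul_mem _ _ (Submodule.subset_span h1))
        (Submodule.smul_mem _ _ (Submodule.subset_span h4))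
    · have : eC 1 = (-(Complex.I/2)) • w1 + (Complex.I/2) • w1b := by
        funext j; fin_cases j <;>
          simp [w1, w1b, eC, Pi.single_apply, Complex.ext_iff] <;> norm_num
      rw [this]
      exact Submodule.add_mem _ (Submodule.smul_mem _ _ (Submodule.subset_span h1))
        (Submodule.smul_mem _ _ (Submodule.subset_span h4))
    · have : eC 2 = (2⁻¹ : ℂ) • w2 + (2⁻¹ : ℂ) • w2b := by
        funext j; fin_cases j <;>
          simp [w2, w2b, eC, Pi.single_apply] <;> norm_num
      rw [this]
      exact Submodule.add_mem _ (Submodule.smul_mem _ _ (Submodule.subset_span h5))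
        (Submodule.smul_mem _ _ (Submodule.subset_span h2))
    · have : eC 3 = (-(Complex.I/2)) • w2 + (Complex.I/2) • w2b := by
        funext j; fin_cases j <;>
          simp [w2, w2b, eC, Pi.single_apply, Complex.ext_iff] <;> norm_num
      rw [this]
      exact Submodule.add_mem _ (Submodule.smul_mem _ _ (Submodule.subset_span h5))
        (Submodule.smul_mem _ _ (Submodule.subset_span h2))
    · have : eC 4 = (2⁻¹ : ℂ) • w3 + (2⁻¹ : ℂ) • w3b := by
        funext j; fin_cases j <;>
          simp [w3, w3b, eC, Pi.single_apply] <;> norm_num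
      rw [this]
      exact Submodule.add_mem _ (Submodule.smul_mem _ _ (Submodule.subset_span h6))
        (Submodule.smul_mem _ _ (Submodule.subset_span h3))
    · have : eC 5 = (-(Complex.I/2)) • w3 + (Complex.I/2) • w3b := by
        funext j; fin_cases j <;>
          simp [w3, w3b, eC, Pi.single_apply, Complex.ext_iff] <;> norm_num
      rw [this]
      exact Submodule.add_mem _ (Submodule.smul_mem _ _ (Submodule.subset_span h6))
        (Submodule.smul_mem _ _ (Submodule.subset_span h3))
  rw [pi_sum_eC x]
  exact Submodule.sum_mem _ fun i _ => Submodule.smul_mem _ _ (he i)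
lemma mem_span_triple {p q r z : MC} (h : z ∈ Submodule.span ℂ {p, q, r}) :
    ∃ a b c : ℂ, z = a • p + b • q + c • r := by
  rw [Submodule.mem_span_insert] at h
  obtain ⟨a, z1, hz1, rfl⟩ := h
  rw [Submodule.mem_span_insert] at hz1
  obtain ⟨b, z2, hz2, rfl⟩ := hz1
  rw [Submodule.mem_span_singleton] at hz2
  obtain ⟨c, rfl⟩ := hz2
  exact ⟨a, b, c, by module⟩

lemma ann_of_three (J : Module.End ℝ GV) (g1 g2 g3 : MC)
    (hspan : Submodule.span ℂ {g1, g2, g3} = holSub J) (Z : MC)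
    (h1 : evC g1 Z = 0) (h2 : evC g2 Z = 0) (h3 : evC g3 Z = 0) :
    ∀ α ∈ holSub J, evC α Z = 0 := by
  intro α hα
  rw [← hspan] at hα
  induction hα using Submodule.span_induction with
  | mem x hx =>
    rcases hx with rfl | rfl | rfl
    · exact h1
    · exact h2
    · exact h3
  | zero => simp [evC]
  | add x y hx hy ihx ihy =>
    have : evC (x + y) Z = evC x Z + evC y Z := by
      simp [evC, add_mul, Finset.sum_add_distrib]
    rw [this, ihx, ihy, add_zero]
  | smul a x hx ihx =>
    have : evC (a • x) Z = a * evC x Z := by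
      simp [evC, mul_assoc, Finset.mul_sum]
    rw [this, ihx, mul_zero]
lemma vec6_at0 {α : Type*} (a0 a1 a2 a3 a4 a5 : α) : ![a0,a1,a2,a3,a4,a5] (0 : Fin 6) = a0 := rfl
lemma vec6_at1 {α : Type*} (a0 a1 a2 a3 a4 a5 : α) : ![a0,a1,a2,a3,a4,a5] (1 : Fin 6) = a1 := rfl
lemma vec6_at2 {α : Type*} (a0 a1 a2 a3 a4 a5 : α) : ![a0,a1,a2,a3,a4,a5] (2 : Fin 6) = a2 := rfl
lemma vec6_at3 {α : Type*} (a0 a1 a2 a3 a4 a5 : α) : ![a0,a1,a2,a3,a4,a5] (3 : Fin 6) = a3 := rfl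
lemma vec6_at4 {α : Type*} (a0 a1 a2 a3 a4 a5 : α) : ![a0,a1,a2,a3,a4,a5] (4 : Fin 6) = a4 := rfl
lemma vec6_at5 {α : Type*} (a0 a1 a2 a3 a4 a5 : α) : ![a0,a1,a2,a3,a4,a5] (5 : Fin 6) = a5 := rfl

lemma w1_eq : w1 = ![1, Complex.I, 0, 0, 0, 0] := by
  funext j; fin_cases j <;> simp (config := { decide := true }) [w1, eC, Pi.single_apply] <;> try rfl
lemma w2_eq : w2 = ![0, 0, 1, Complex.I, 0, 0] := by
  funext j; fin_cases j <;> simp (config := { decide := true }) [w2, eC, Pi.single_apply] <;> try rfl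
lemma w3_eq : w3 = ![0, 0, 0, 0, 1, Complex.I] := by
  funext j; fin_cases j <;> simp (config := { decide := true }) [w3, eC, Pi.single_apply] <;> try rfl
lemma w1b_eq : w1b = ![1, -Complex.I, 0, 0, 0, 0] := by
  funext j; fin_cases j <;> simp (config := { decide := true }) [w1b, eC, Pi.single_apply] <;> try rfl
lemma w2b_eq : w2b = ![0, 0, 1, -Complex.I, 0, 0] := by
  funext j; fin_cases j <;> simp (config := { decide := true }) [w2b, eC, Pi.single_apply] <;> try rfl
lemma w3b_eq : w3b = ![0, 0, 0, 0, 1, -Complex.I] := by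
  funext j; fin_cases j <;> simp (config := { decide := true }) [w3b, eC, Pi.single_apply] <;> try rfl

set_option maxHeartbeats 2000000

/-- echelon form for `(1,0)`-bases of structures at finite distance from `J₁`. -/
theorem stmt13 (J : Module.End ℝ GV) (hJ : J ∈ Cplus) (b1 b2 b3 : MC)
    (hb : IsHolBasis J b1 b2 b3)
    (hw : ι b1 * ι b2 * ι b3 * ι w1b * ι w2 * ι w3 ≠ 0) :
    ∃ a b c d x y v : ℂ, d = -(a * v) ∧
      IsHolBasis J (w1 + a • w1b + b • w2) (w2b + c • w1b + d • w2)
        (w3b + x • w1b + y • w2 + v • w3) := by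
  obtain ⟨hJcs, hJint, -⟩ := hJ
  obtain ⟨hLIb, hspan⟩ := hb
  -- Step A : the six vectors are linearly independent
  have hLI6 : LinearIndependent ℂ ![b1, b2, b3, w1b, w2, w3] := by
    by_contra h
    apply hw
    have h0 := AlternatingMap.map_linearDependent (ExteriorAlgebra.ιMulti ℂ 6 (M := MC))
      ![b1, b2, b3, w1b, w2, w3] h
    rw [ExteriorAlgebra.ιMulti_apply] at h0
    simpa [List.ofFn_succ, ι, mul_assoc] using h0
  have hcard : Fintype.card (Fin 6) = Module.finrank ℂ MC := by
    simp [Module.finrank_pi]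
  have htop : Submodule.span ℂ (Set.range ![b1, b2, b3, w1b, w2, w3]) = ⊤ :=
    hLI6.span_eq_top_of_card_eq_finrank hcard
  have hHS_top : Submodule.span ℂ {b1, b2, b3} ⊔ Submodule.span ℂ {w1b, w2, w3} = ⊤ := by
    rw [← Submodule.span_union, ← htop]
    congr 1
    ext z
    simp [Matrix.range_cons, Matrix.range_empty]
    tauto
  have hdisj : Disjoint (Submodule.span ℂ {b1, b2, b3}) (Submodule.span ℂ {w1b, w2, w3}) := by
    have h1 : (![b1, b2, b3, w1b, w2, w3] '' ({0,1,2} : Set (Fin 6))) = {b1, b2, b3} := by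
      simp [Set.image_insert_eq]
    have h2 : (![b1, b2, b3, w1b, w2, w3] '' ({3,4,5} : Set (Fin 6))) = {w1b, w2, w3} := by
      simp [Set.image_insert_eq, show (![b1,b2,b3,w1b,w2,w3] : Fin 6 → MC) 5 = w3 from rfl]
    have := hLI6.disjoint_span_image (s := {0,1,2}) (t := {3,4,5})
      (by rw [Set.disjoint_left]; rintro a ha hb; fin_cases a <;> simp_all)
    rwa [h1, h2] at this
  -- Step B : decompose w1, w2b, w3b
  have hdec : ∀ m : MC, ∃ A B T : ℂ,
      m + A • w1b + B • w2 + T • w3 ∈ Submodule.span ℂ {b1, b2, b3} := by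
    intro m
    have hm : m ∈ Submodule.span ℂ {b1, b2, b3} ⊔ Submodule.span ℂ {w1b, w2, w3} := by
      rw [hHS_top]; trivial
    rw [Submodule.mem_sup] at hm
    obtain ⟨h1, hh1, s1, hs1, hsum⟩ := hm
    obtain ⟨A, B, T, rfl⟩ := mem_span_triple hs1
    refine ⟨-A, -B, -T, ?_⟩
    have : m + (-A) • w1b + (-B) • w2 + (-T) • w3 = h1 := by
      rw [← hsum]; module
    rw [this]; exact hh1
  obtain ⟨A1, B1, T1, hγ1H⟩ := hdec w1
  obtain ⟨A2, B2, T2, hγ2H⟩ := hdec w2b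
  obtain ⟨A3, B3, T3, hγ3H⟩ := hdec w3b
  set γ1 : MC := w1 + A1 • w1b + B1 • w2 + T1 • w3 with hγ1
  set γ2 : MC := w2b + A2 • w1b + B2 • w2 + T2 • w3 with hγ2
  set γ3 : MC := w3b + A3 • w1b + B3 • w2 + T3 • w3 with hγ3
  have hγ1hol : γ1 ∈ holSub J := hspan ▸ hγ1H
  have hγ2hol : γ2 ∈ holSub J := hspan ▸ hγ2H
  have hγ3hol : γ3 ∈ holSub J := hspan ▸ hγ3H
  -- span of the γ's is holSub J
  have hspanG : Submodule.span ℂ {γ1, γ2, γ3} = holSub J := by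
    apply le_antisymm
    · rw [Submodule.span_le]
      rintro z (rfl | rfl | rfl)
      exacts [hγ1hol, hγ2hol, hγ3hol]
    · rw [← hspan]
      intro m hm
      have hmW : m ∈ Submodule.span ℂ ({w1, w2b, w3b} : Set MC)
          ⊔ Submodule.span ℂ ({w1b, w2, w3} : Set MC) := by
        rw [← Submodule.span_union]
        have : ({w1, w2b, w3b} ∪ {w1b, w2, w3} : Set MC) = {w1, w2b, w3b, w1b, w2, w3} := by
          ext z; simp; tauto
        rw [this, span_w_top]; trivial
      rw [Submodule.mem_sup] at hmW
      obtain ⟨u, hu, s, hs, hsum⟩ := hmW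
      obtain ⟨c1, c2, c3, rfl⟩ := mem_span_triple hu
      have hdiff : m - (c1 • γ1 + c2 • γ2 + c3 • γ3) = 0 := by
        have hSmem : m - (c1 • γ1 + c2 • γ2 + c3 • γ3) ∈ Submodule.span ℂ {w1b, w2, w3} := by
          have heq : m - (c1 • γ1 + c2 • γ2 + c3 • γ3)
              = s + (-(c1 * A1) - c2 * A2 - c3 * A3) • w1b
                + (-(c1 * B1) - c2 * B2 - c3 * B3) • w2
                + (-(c1 * T1) - c2 * T2 - c3 * T3) • w3 := by
            rw [← hsum, hγ1, hγ2, hγ3]; module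
          rw [heq]
          have hw1b : w1b ∈ Submodule.span ℂ ({w1b, w2, w3} : Set MC) :=
            Submodule.subset_span (by simp)
          have hw2 : w2 ∈ Submodule.span ℂ ({w1b, w2, w3} : Set MC) :=
            Submodule.subset_span (by simp)
          have hw3 : w3 ∈ Submodule.span ℂ ({w1b, w2, w3} : Set MC) :=
            Submodule.subset_span (by simp)
          exact Submodule.add_mem _ (Submodule.add_mem _ (Submodule.add_mem _ hs
            (Submodule.smul_mem _ _ hw1b)) (Submodule.smul_mem _ _ hw2))
            (Submodule.smul_mem _ _ hw3)
        have hHmem : m - (c1 • γ1 + c2 • γ2 + c3 • γ3) ∈ Submodule.span ℂ {b1, b2, b3} := by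
          refine Submodule.sub_mem _ hm ?_
          refine Submodule.add_mem _ (Submodule.add_mem _ ?_ ?_) ?_ <;>
            exact Submodule.smul_mem _ _ (by assumption)
        exact (Submodule.disjoint_def.mp hdisj) _ hHmem hSmem
      have : m = c1 • γ1 + c2 • γ2 + c3 • γ3 := by
        have := sub_eq_zero.mp hdiff; exact this
      rw [this]
      refine Submodule.add_mem _ (Submodule.add_mem _ ?_ ?_) ?_ <;>
        exact Submodule.smul_mem _ _ (Submodule.subset_span (by simp))
  -- linear independence of the γ's
  have hLIG : LinearIndependent ℂ ![γ1, γ2, γ3] := by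
    rw [Fintype.linearIndependent_iff]
    intro g hg
    rw [Fin.sum_univ_three] at hg
    simp only [Matrix.cons_val_zero, Matrix.cons_val_one, Matrix.head_cons,
      Matrix.cons_val_two, Matrix.tail_cons] at hg
    have e0 := congrFun hg 0
    have e1 := congrFun hg 1
    have e2 := congrFun hg 2
    have e3 := congrFun hg 3
    have e4 := congrFun hg 4
    have e5 := congrFun hg 5
    simp only [hγ1, hγ2, hγ3, w1_eq, w2_eq, w3_eq, w1b_eq, w2b_eq, w3b_eq, Pi.add_apply,
      Pi.smul_apply, smul_eq_mul, Pi.zero_apply, vec6_at0, vec6_at1, vec6_at2, vec6_at3,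
      vec6_at4, vec6_at5] at e0 e1 e2 e3 e4 e5
    ring_nf at e0 e1 e2 e3 e4 e5
    have f1 : g 0 * (1 - A1) - g 1 * A2 - g 2 * A3 = 0 := by
      apply mul_left_cancel₀ Complex.I_ne_zero
      rw [mul_zero]
      linear_combination e1
    have f3 : g 0 * B1 + g 1 * (B2 - 1) + g 2 * B3 = 0 := by
      apply mul_left_cancel₀ Complex.I_ne_zero
      rw [mul_zero]
      linear_combination e3
    have f5 : g 0 * T1 + g 1 * T2 + g 2 * (T3 - 1) = 0 := by
      apply mul_left_cancel₀ Complex.I_ne_zero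
      rw [mul_zero]
      linear_combination e5
    have hg0 : g 0 = 0 := by linear_combination (e0 + f1) / 2
    have hg1 : g 1 = 0 := by linear_combination (e2 - f3) / 2
    have hg2 : g 2 = 0 := by linear_combination (e4 - f5) / 2
    intro i; fin_cases i <;> assumption
  -- the distinguished kernel vectors
  set Z : MC := ![(1-A1)/2, Complex.I*(1+A1)/2, -A2/2, -Complex.I*A2/2, -A3/2, -Complex.I*A3/2]
    with hZdef
  set W : MC := ![-B1/2, Complex.I*B1/2, (1-B2)/2, -Complex.I*(1+B2)/2, -B3/2, -Complex.I*B3/2]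
    with hWdef
  set U : MC := ![-T1/2, Complex.I*T1/2, -T2/2, -Complex.I*T2/2, (1-T3)/2, -Complex.I*(1+T3)/2]
    with hUdef
  have hZann : ∀ α ∈ holSub J, evC α Z = 0 := by
    refine ann_of_three J γ1 γ2 γ3 hspanG Z ?_ ?_ ?_ <;>
    · simp only [hγ1, hγ2, hγ3, hZdef, evC, Fin.sum_univ_six, w1_eq, w2_eq, w3_eq, w1b_eq,
        w2b_eq, w3b_eq, Pi.add_apply, Pi.smul_apply, smul_eq_mul, vec6_at0, vec6_at1,
        vec6_at2, vec6_at3, vec6_at4, vec6_at5]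
      rw [Complex.ext_iff]
      constructor <;> simp <;> ring
  have hWann : ∀ α ∈ holSub J, evC α W = 0 := by
    refine ann_of_three J γ1 γ2 γ3 hspanG W ?_ ?_ ?_ <;>
    · simp only [hγ1, hγ2, hγ3, hWdef, evC, Fin.sum_univ_six, w1_eq, w2_eq, w3_eq, w1b_eq,
        w2b_eq, w3b_eq, Pi.add_apply, Pi.smul_apply, smul_eq_mul, vec6_at0, vec6_at1,
        vec6_at2, vec6_at3, vec6_at4, vec6_at5]
      rw [Complex.ext_iff]
      constructor <;> simp <;> ring
  have hUann : ∀ α ∈ holSub J, evC α U = 0 := by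
    refine ann_of_three J γ1 γ2 γ3 hspanG U ?_ ?_ ?_ <;>
    · simp only [hγ1, hγ2, hγ3, hUdef, evC, Fin.sum_univ_six, w1_eq, w2_eq, w3_eq, w1b_eq,
        w2b_eq, w3b_eq, Pi.add_apply, Pi.smul_apply, smul_eq_mul, vec6_at0, vec6_at1,
        vec6_at2, vec6_at3, vec6_at4, vec6_at5]
      rw [Complex.ext_iff]
      constructor <;> simp <;> ring
  -- the three integrability equations
  have eqWU := keyE J hJcs hJint γ1 hγ1hol W U hWann hUann
  have eqZU := keyE J hJcs hJint γ3 hγ3hol Z U hZann hUann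
  have eqZW := keyE J hJcs hJint γ3 hγ3hol Z W hZann hWann
  have hvalWU : evC γ1 (brC W U) = -(T1 * T1) := by
    simp only [hγ1, hWdef, hUdef, evC, Fin.sum_univ_six, brC_app0, brC_app1, brC_app2,
      brC_app3, brC_app4, brC_app5, w1_eq, w2_eq, w3_eq, w1b_eq, w2b_eq, w3b_eq, Pi.add_apply,
      Pi.smul_apply, smul_eq_mul, vec6_at0, vec6_at1, vec6_at2, vec6_at3, vec6_at4, vec6_at5]
    rw [Complex.ext_iff]
    constructor <;> simp <;> ring
  have hvalZU : evC γ3 (brC Z U) = T2 := by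
    simp only [hγ3, hZdef, hUdef, evC, Fin.sum_univ_six, brC_app0, brC_app1, brC_app2,
      brC_app3, brC_app4, brC_app5, w1_eq, w2_eq, w3_eq, w1b_eq, w2b_eq, w3b_eq, Pi.add_apply,
      Pi.smul_apply, smul_eq_mul, vec6_at0, vec6_at1, vec6_at2, vec6_at3, vec6_at4, vec6_at5]
    rw [Complex.ext_iff]
    constructor <;> simp <;> ring
  have hvalZW : evC γ3 (brC Z W) = T3 * A1 + B2 := by
    simp only [hγ3, hZdef, hWdef, evC, Fin.sum_univ_six, brC_app0, brC_app1, brC_app2,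
      brC_app3, brC_app4, brC_app5, w1_eq, w2_eq, w3_eq, w1b_eq, w2b_eq, w3b_eq, Pi.add_apply,
      Pi.smul_apply, smul_eq_mul, vec6_at0, vec6_at1, vec6_at2, vec6_at3, vec6_at4, vec6_at5]
    rw [Complex.ext_iff]
    constructor <;> simp <;> ring
  have hT1 : T1 = 0 := by
    have : T1 * T1 = 0 := by rw [hvalWU] at eqWU; linear_combination -eqWU
    exact mul_self_eq_zero.mp this
  have hT2 : T2 = 0 := by rw [hvalZU] at eqZU; exact eqZU
  have hd : B2 = -(A1 * T3) := by rw [hvalZW] at eqZW; linear_combination eqZW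
  refine ⟨A1, B1, A2, B2, A3, B3, T3, hd, ?_⟩
  have hγ1' : w1 + A1 • w1b + B1 • w2 = γ1 := by rw [hγ1, hT1]; module
  have hγ2' : w2b + A2 • w1b + B2 • w2 = γ2 := by rw [hγ2, hT2]; module
  have hγ3' : w3b + A3 • w1b + B3 • w2 + T3 • w3 = γ3 := by rw [hγ3]
  rw [hγ1', hγ2', hγ3']
  exact ⟨hLIG, hspanG⟩

end
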